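/- Let G be a connected finite simple graph with n ≥ 2 vertices and m edges, with Laplacian L_G, degree matrix D_G, all-ones matrix J, identity I, and Moore–Penrose pseudoinverse L_G^†. Suppose M : V_G × V_G → ℝ satisfies the hitting-time recursion: M(v,v) = 0 for all v, and M(u,v) = 1 + deg_G(u)^{−1} Σ_{w ∈ N_G(u)} M(w,v) for all u ≠ v. Then (viewing M as a matrix): (i) L_G M = D_G J − 2m I; and (ii) M = L_G^† D_G J − J D_G L_G^† + 2m · J · diag(L_G^†) − 2m · L_G^†, where diag(L_G^†) denotes the diagonal matrix whose (u,u) entry is L_G^†(u,u). -/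

import Mathlib

open scoped Classical
open Matrix BigOperators

noncomputable section

namespace EPWL

/-! ### Generic node-coloring refinement with pairwise features in a type `α` -/

/-- The common nested type of round-`l` colors: `C 0 = Unit`,
`C (l+1) = C l × Multiset (C l × α)`. -/
def Color (α : Type) : ℕ → Type
  | 0 => Unit
  | l + 1 => Color α l × Multiset (Color α l × α)

/-- The color refinement: `χ⁰(u) = ()` and
`χ^{l+1}(u) = (χ^l(u), {{(χ^l(v), f u v) : v}})`. -/
def colorFn {V : Type*} [Fintype V] {α : Type} (f : V → V → α) :
    (l : ℕ) → V → Color α l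
  | 0 => fun _ => ()
  | l + 1 => fun u =>
      (colorFn f l u, Finset.univ.val.map fun v => (colorFn f l v, f u v))

/-- Two graphs (presented through their pairwise-feature functions) are
indistinguishable by the node-coloring refinement: at every round, the
multisets of node colors agree. -/
def NodeIndist {V W : Type*} [Fintype V] [Fintype W] {α : Type}
    (f : V → V → α) (g : W → W → α) : Prop :=
  ∀ l : ℕ, Finset.univ.val.map (colorFn f l) = Finset.univ.val.map (colorFn g l)

/-- Atomic type of an ordered vertex pair: `0` if equal, `1` if adjacent,
`2` otherwise. -/
def atp {V : Type*} (G : SimpleGraph V) (u v : V) : ℕ :=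
  if u = v then 0 else if G.Adj u v then 1 else 2

/-- 1-WL indistinguishability. -/
def WL1Indist {V W : Type*} [Fintype V] [Fintype W]
    (G : SimpleGraph V) (H : SimpleGraph W) : Prop :=
  NodeIndist (atp G) (atp H)

/-! ### Graph matrices -/

/-- Real adjacency matrix. -/
def adjM {V : Type*} [Fintype V] (G : SimpleGraph V) : Matrix V V ℝ :=
  G.adjMatrix ℝ

/-- Real (diagonal) degree matrix. -/
def degM {V : Type*} [Fintype V] (G : SimpleGraph V) : Matrix V V ℝ :=
  Matrix.diagonal fun v => (G.degree v : ℝ)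

/-- Laplacian matrix `L = D - A`. -/
def lapM {V : Type*} [Fintype V] (G : SimpleGraph V) : Matrix V V ℝ :=
  degM G - adjM G

/-- The diagonal matrix `D^{-1/2}`. -/
def invSqrtDegM {V : Type*} [Fintype V] (G : SimpleGraph V) : Matrix V V ℝ :=
  Matrix.diagonal fun v => (Real.sqrt (G.degree v))⁻¹

/-- Normalized Laplacian `L̂ = D^{-1/2} L D^{-1/2}`. -/
def normLapM {V : Type*} [Fintype V] (G : SimpleGraph V) : Matrix V V ℝ :=
  invSqrtDegM G * lapM G * invSqrtDegM G

/-- Normalized adjacency matrix `Â = D^{-1/2} A D^{-1/2}`. -/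
def normAdjM {V : Type*} [Fintype V] (G : SimpleGraph V) : Matrix V V ℝ :=
  invSqrtDegM G * adjM G * invSqrtDegM G

/-- The diagonal matrix `D⁻¹` of inverse degrees. -/
def invDegM {V : Type*} [Fintype V] (G : SimpleGraph V) : Matrix V V ℝ :=
  Matrix.diagonal fun v => ((G.degree v : ℝ))⁻¹

/-- The random-walk matrix `D⁻¹ A`. -/
def rwM {V : Type*} [Fintype V] (G : SimpleGraph V) : Matrix V V ℝ :=
  invDegM G * adjM G

/-- The all-ones matrix `J`. -/
def allOnes (V : Type*) : Matrix V V ℝ := Matrix.of fun _ _ => 1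

/-- A choice among the three graph matrices `A`, `L`, `L̂`. -/
inductive MatChoice | adj | lap | normLap

/-- The graph matrix associated with a choice. -/
def matOf {V : Type*} [Fintype V] (c : MatChoice) (G : SimpleGraph V) :
    Matrix V V ℝ :=
  match c with
  | .adj => adjM G
  | .lap => lapM G
  | .normLap => normLapM G

/-! ### Spectral decompositions and the eigenspace projection invariant -/

/-- `IsSpectralDecomp M Λ P` says: `Λ` is the (finite) set of distinct
eigenvalues of the symmetric matrix `M` and, for `lam ∈ Λ`, `P lam` is the
orthogonal projection onto the eigenspace of `lam`. This is characterized
uniquely by: the `P lam` are symmetric idempotent nonzero matrices,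
pairwise "orthogonal" (`P lam * P mu = 0` for `lam ≠ mu`), summing to the
identity, with `∑ lam • P lam = M`. -/
structure IsSpectralDecomp {n : Type*} [Fintype n]
    (M : Matrix n n ℝ) (Λ : Finset ℝ) (P : ℝ → Matrix n n ℝ) : Prop where
  symm : ∀ lam ∈ Λ, (P lam)ᵀ = P lam
  idem : ∀ lam ∈ Λ, P lam * P lam = P lam
  nonzero : ∀ lam ∈ Λ, P lam ≠ 0
  orth : ∀ lam ∈ Λ, ∀ mu ∈ Λ, lam ≠ mu → P lam * P mu = 0
  sum_one : ∑ lam ∈ Λ, P lam = 1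
  sum_smul : ∑ lam ∈ Λ, lam • P lam = M

/-- The eigenspace projection invariant
`𝒫^M(u,v) = {{(lam, P_lam(u,v)) : lam eigenvalue of M}}`. -/
def projInv {n : Type*} (Λ : Finset ℝ) (P : ℝ → Matrix n n ℝ) (u v : n) :
    Multiset (ℝ × ℝ) :=
  Λ.val.map fun lam => (lam, P lam u v)

/-! ### Subgraph Weisfeiler-Lehman variants (SWL, PSWL) and 3-WL -/

/-- Round-`l` color type for SWL. -/
def SColor : ℕ → Type
  | 0 => ℕ
  | l + 1 => SColor l × Multiset (SColor l × ℕ)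

/-- Initial pair color: `1` on the diagonal, `0` off it. -/
def initPairColor {V : Type*} (u v : V) : ℕ := if u = v then 1 else 0

/-- The SWL pair-coloring. -/
def swl {V : Type*} [Fintype V] (G : SimpleGraph V) :
    (l : ℕ) → V → V → SColor l
  | 0 => fun u v => initPairColor u v
  | l + 1 => fun u v =>
      (swl G l u v, Finset.univ.val.map fun w => (swl G l u w, atp G v w))

/-- SWL indistinguishability. -/
def SWLIndist {V W : Type*} [Fintype V] [Fintype W]
    (G : SimpleGraph V) (H : SimpleGraph W) : Prop :=
  ∀ l : ℕ,
    ((Finset.univ : Finset (V × V)).val.map fun p => swl G l p.1 p.2) =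
      ((Finset.univ : Finset (W × W)).val.map fun p => swl H l p.1 p.2)

/-- Round-`l` color type for PSWL. -/
def PSColor : ℕ → Type
  | 0 => ℕ
  | l + 1 => PSColor l × PSColor l × Multiset (PSColor l × ℕ)

/-- The PSWL pair-coloring. -/
def pswl {V : Type*} [Fintype V] (G : SimpleGraph V) :
    (l : ℕ) → V → V → PSColor l
  | 0 => fun u v => initPairColor u v
  | l + 1 => fun u v =>
      (pswl G l u v, pswl G l v v,
        Finset.univ.val.map fun w => (pswl G l u w, atp G v w))

/-- PSWL indistinguishability. -/
def PSWLIndist {V W : Type*} [Fintype V] [Fintype W]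
    (G : SimpleGraph V) (H : SimpleGraph W) : Prop :=
  ∀ l : ℕ,
    ((Finset.univ : Finset (V × V)).val.map fun p => pswl G l p.1 p.2) =
      ((Finset.univ : Finset (W × W)).val.map fun p => pswl H l p.1 p.2)

/-- Round-`l` color type for 3-WL; the initial color records which of
`u, v, w` coincide and which of the pairs are edges. -/
def W3Color : ℕ → Type
  | 0 => Bool × Bool × Bool × Bool × Bool × Bool
  | l + 1 => W3Color l × Multiset (W3Color l × W3Color l × W3Color l)

/-- The 3-WL triple-coloring. -/
def wl3 {V : Type*} [Fintype V] (G : SimpleGraph V) :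
    (l : ℕ) → V → V → V → W3Color l
  | 0 => fun u v w =>
      (decide (u = v), decide (u = w), decide (v = w),
        decide (G.Adj u v), decide (G.Adj u w), decide (G.Adj v w))
  | l + 1 => fun u v w =>
      (wl3 G l u v w,
        Finset.univ.val.map fun z =>
          (wl3 G l z v w, wl3 G l u z w, wl3 G l u v z))

/-- 3-WL indistinguishability. -/
def WL3Indist {V W : Type*} [Fintype V] [Fintype W]
    (G : SimpleGraph V) (H : SimpleGraph W) : Prop :=
  ∀ l : ℕ,
    ((Finset.univ : Finset (V × V × V)).val.map fun p => wl3 G l p.1 p.2.1 p.2.2) =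
      ((Finset.univ : Finset (W × W × W)).val.map fun p => wl3 H l p.1 p.2.1 p.2.2)

/-! ### Distances -/

/-- The shortest-path distance, valued in `ℕ∞`. -/
def spd {V : Type*} (G : SimpleGraph V) (u v : V) : ℕ∞ := G.edist u v

/-- The four Penrose conditions characterizing the Moore–Penrose
pseudoinverse `X` of `B`. -/
def IsMoorePenrose {n : Type*} [Fintype n] (B X : Matrix n n ℝ) : Prop :=
  B * X * B = B ∧ X * B * X = X ∧ (B * X)ᵀ = B * X ∧ (X * B)ᵀ = X * B

/-- Resistance distance computed from (a Moore–Penrose pseudoinverse of)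
the Laplacian: `X(u,u) + X(v,v) - 2X(u,v)` for vertices in the same
connected component, and `∞` otherwise. -/
def rdOf {V : Type*} (G : SimpleGraph V) (X : Matrix V V ℝ) (u v : V) :
    WithTop ℝ :=
  if G.Reachable u v then ((X u u + X v v - 2 * X u v : ℝ) : WithTop ℝ) else ⊤

/-- Matrix exponential, as the everywhere-convergent power series
`exp B = ∑ Bⁿ/n!`. -/
def matExp {V : Type*} [Fintype V] (B : Matrix V V ℝ) : Matrix V V ℝ :=
  ∑' n : ℕ, ((n.factorial : ℝ))⁻¹ • B ^ n

/-! ### Connectivity notions -/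

/-- Number of connected components. -/
def numComponents {V : Type*} (G : SimpleGraph V) : ℕ :=
  Nat.card G.ConnectedComponent

/-- A cut vertex: deleting it (and all incident edges) strictly increases
the number of connected components. -/
def IsCutVertex {V : Type*} (G : SimpleGraph V) (v : V) : Prop :=
  numComponents G < numComponents (G.induce {w : V | w ≠ v})

/-- A cut edge: it is an edge whose deletion strictly increases the number
of connected components. -/
def IsCutEdge {V : Type*} (G : SimpleGraph V) (e : Sym2 V) : Prop :=
  e ∈ G.edgeSet ∧ numComponents G < numComponents (G.deleteEdges {e})


/-- Uniqueness of the Moore–Penrose pseudoinverse. -/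
lemma isMoorePenrose_unique {n : Type*} [Fintype n] {B X Y : Matrix n n ℝ}
    (hX : IsMoorePenrose B X) (hY : IsMoorePenrose B Y) : X = Y := by
  obtain ⟨hX1, hX2, hX3, hX4⟩ := hX
  obtain ⟨hY1, hY2, hY3, hY4⟩ := hY
  have hBX : B * X = B * Y := by
    calc B * X = (B * X)ᵀ := hX3.symm
    _ = (B * Y * B * X)ᵀ := by rw [hY1]
    _ = ((B * Y) * (B * X))ᵀ := by simp only [mul_assoc]
    _ = (B * X)ᵀ * (B * Y)ᵀ := Matrix.transpose_mul _ _
    _ = (B * X) * (B * Y) := by rw [hX3, hY3]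
    _ = (B * X * B) * Y := by simp only [mul_assoc]
    _ = B * Y := by rw [hX1]
  have hXB : X * B = Y * B := by
    calc X * B = (X * B)ᵀ := hX4.symm
    _ = (X * (B * Y * B))ᵀ := by rw [hY1]
    _ = ((X * B) * (Y * B))ᵀ := by simp only [mul_assoc]
    _ = (Y * B)ᵀ * (X * B)ᵀ := Matrix.transpose_mul _ _
    _ = (Y * B) * (X * B) := by rw [hX4, hY4]
    _ = Y * (B * X * B) := by simp only [mul_assoc]
    _ = Y * B := by rw [hX1]
  calc X = X * B * X := hX2.symm
  _ = X * (B * Y) := by rw [mul_assoc, hBX]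
  _ = (X * B) * Y := by rw [mul_assoc]
  _ = Y * B * Y := by rw [hXB]
  _ = Y := hY2

/-- The transpose of a Moore–Penrose pseudoinverse is a Moore–Penrose
pseudoinverse of the transpose. -/
lemma isMoorePenrose_transpose {n : Type*} [Fintype n] {B X : Matrix n n ℝ}
    (h : IsMoorePenrose B X) : IsMoorePenrose Bᵀ Xᵀ := by
  obtain ⟨h1, h2, h3, h4⟩ := h
  refine ⟨?_, ?_, ?_, ?_⟩
  · have e : Bᵀ * Xᵀ * Bᵀ = (B * X * B)ᵀ := by
      simp only [Matrix.transpose_mul, mul_assoc]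
    rw [e, h1]
  · have e : Xᵀ * Bᵀ * Xᵀ = (X * B * X)ᵀ := by
      simp only [Matrix.transpose_mul, mul_assoc]
    rw [e, h2]
  · have e : Bᵀ * Xᵀ = (X * B)ᵀ := (Matrix.transpose_mul X B).symm
    rw [e, Matrix.transpose_transpose]
    exact h4.symm
  · have e : Xᵀ * Bᵀ = (B * X)ᵀ := (Matrix.transpose_mul B X).symm
    rw [e, Matrix.transpose_transpose]
    exact h3.symm

/-- For a solution `M` of the hitting-time recursion on a
connected graph with at least two vertices and `m` edges, viewed as a
matrix: (i) `L M = D J − 2m I`, and (ii)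
`M = L† D J − J D L† + 2m · J · diag(L†) − 2m · L†`. -/
theorem hitting_time_matrix_formula {V : Type*} [Fintype V]
    (G : SimpleGraph V) (hconn : G.Connected) (hcard : 1 < Fintype.card V)
    (M : Matrix V V ℝ)
    (h0 : ∀ v, M v v = 0)
    (hrec : ∀ u v, u ≠ v →
      M u v = 1 + ((G.degree u : ℝ))⁻¹ * ∑ w ∈ G.neighborFinset u, M w v)
    (X : Matrix V V ℝ) (hX : IsMoorePenrose (lapM G) X) :
    lapM G * M =
        degM G * allOnes V - (2 * (G.edgeFinset.card : ℝ)) • (1 : Matrix V V ℝ) ∧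
    M = X * degM G * allOnes V - allOnes V * degM G * X
        + (2 * (G.edgeFinset.card : ℝ)) •
            (allOnes V * Matrix.diagonal fun u => X u u)
        - (2 * (G.edgeFinset.card : ℝ)) • X := by
  classical
  have hlapM : lapM G = G.lapMatrix ℝ := rfl
  set em : ℝ := 2 * (G.edgeFinset.card : ℝ) with hem
  have hNV : Nonempty V := Fintype.card_pos_iff.mp (by omega)
  have hn : (Fintype.card V : ℝ) ≠ 0 := by
    exact Nat.cast_ne_zero.mpr (by omega)
  -- degrees are positive
  have hdegpos : ∀ u : V, 0 < G.degree u := by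
    intro u
    obtain ⟨v, hv⟩ := Fintype.exists_ne_of_one_lt_card hcard u
    rw [G.degree_pos_iff_exists_adj]
    obtain ⟨p⟩ := hconn.preconnected u v
    cases p with
    | nil => exact absurd rfl hv
    | cons h q => exact ⟨_, h⟩
  have hdegne : ∀ u : V, (G.degree u : ℝ) ≠ 0 := fun u => by
    exact_mod_cast (hdegpos u).ne'
  -- entrywise description of multiplication by the Laplacian
  have hLapply : ∀ (N : Matrix V V ℝ) (u v : V), (lapM G * N) u v =
      (G.degree u : ℝ) * N u v - ∑ w ∈ G.neighborFinset u, N w v := by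
    intro N u v
    have h := G.lapMatrix_mulVec_apply (R := ℝ) u (fun w => N w v)
    simpa [Matrix.mul_apply, Matrix.mulVec, dotProduct, hlapM] using h
  -- row sums of the Laplacian vanish
  have hrowL : ∀ u : V, ∑ w, lapM G u w = 0 := by
    intro u
    have h1 : ∑ w, (degM G) u w = (G.degree u : ℝ) := by
      simp [degM, Matrix.diagonal]
    have h2 : ∑ w, (adjM G) u w = (G.degree u : ℝ) := by
      simp only [adjM, SimpleGraph.adjMatrix_apply]
      exact (G.degree_eq_sum_if_adj u).symm
    simp [lapM, Matrix.sub_apply, Finset.sum_sub_distrib, h1, h2]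
  have hsymL : ∀ a b : V, lapM G a b = lapM G b a := by
    intro a b
    rw [hlapM]
    exact (G.isSymm_lapMatrix (R := ℝ)).apply b a
  have hcolL : ∀ w : V, ∑ u, lapM G u w = 0 := by
    intro w
    calc ∑ u, lapM G u w = ∑ u, lapM G w u := by
          exact Finset.sum_congr rfl fun u _ => hsymL u w
    _ = 0 := hrowL w
  -- kernel of the Laplacian: constant vectors (connectedness)
  have hker : ∀ x : V → ℝ, lapM G *ᵥ x = 0 → ∀ i j : V, x i = x j := by
    intro x hx i j
    refine (G.lapMatrix_mulVec_eq_zero_iff_forall_reachable (x := x)).mp ?_ i j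
      (hconn.preconnected i j)
    rw [← hlapM, hx]
  -- sum of degrees
  have hsumdeg : ∑ u, (G.degree u : ℝ) = em := by
    rw [hem]
    exact_mod_cast congrArg (Nat.cast : ℕ → ℝ) G.sum_degrees_eq_twice_card_edges
  -- column sums of L * M vanish
  have hcolLM : ∀ v : V, ∑ u, (lapM G * M) u v = 0 := by
    intro v
    simp only [Matrix.mul_apply]
    rw [Finset.sum_comm]
    simp only [← Finset.sum_mul]
    simp [hcolL]
  -- off-diagonal entries of L * M
  have hoff : ∀ u v : V, u ≠ v → (lapM G * M) u v = (G.degree u : ℝ) := by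
    intro u v huv
    rw [hLapply, hrec u v huv, mul_add, mul_one, ← mul_assoc,
      mul_inv_cancel₀ (hdegne u), one_mul]
    ring
  -- diagonal neighbor sums
  have hdiagsum : ∀ v : V,
      ∑ w ∈ G.neighborFinset v, M w v = em - (G.degree v : ℝ) := by
    intro v
    have h1 : ∑ u, (lapM G * M) u v =
        (lapM G * M) v v + ∑ u ∈ Finset.univ.erase v, (lapM G * M) u v :=
      (Finset.add_sum_erase _ _ (Finset.mem_univ v)).symm
    have h2 : ∑ u ∈ Finset.univ.erase v, (lapM G * M) u v =
        ∑ u ∈ Finset.univ.erase v, (G.degree u : ℝ) :=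
      Finset.sum_congr rfl fun u hu => hoff u v (Finset.ne_of_mem_erase hu)
    have h3 : ∑ u ∈ Finset.univ.erase v, (G.degree u : ℝ) =
        em - (G.degree v : ℝ) := by
      rw [← hsumdeg]
      rw [← Finset.add_sum_erase _ _ (Finset.mem_univ v)]
      ring
    have h4 : (lapM G * M) v v = - ∑ w ∈ G.neighborFinset v, M w v := by
      rw [hLapply, h0 v]; ring
    have h5 := hcolLM v
    rw [h1, h2, h3, h4] at h5
    linarith
  -- Part (i)
  have hi : lapM G * M = degM G * allOnes V - em • (1 : Matrix V V ℝ) := by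
    ext u v
    have hDJ : (degM G * allOnes V) u v = (G.degree u : ℝ) := by
      simp [degM, allOnes, Matrix.mul_apply, Matrix.diagonal]
    by_cases h : u = v
    · subst h
      rw [hLapply, h0 u, hdiagsum u]
      simp only [Matrix.sub_apply, Matrix.smul_apply, hDJ, Matrix.one_apply_eq,
        smul_eq_mul, mul_one]
      ring
    · rw [hoff u v h]
      simp [hDJ, Matrix.sub_apply, Matrix.smul_apply, Matrix.one_apply_ne h]
  refine ⟨hi, ?_⟩
  -- Part (ii)
  set J : Matrix V V ℝ := allOnes V with hJ
  set L : Matrix V V ℝ := lapM G with hL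
  have hJT : Jᵀ = J := rfl
  have hLJ : L * J = 0 := by
    ext u v
    simp only [Matrix.mul_apply, hJ, allOnes, Matrix.of_apply, mul_one,
      Matrix.zero_apply]
    exact hrowL u
  have hJL : J * L = 0 := by
    ext u v
    simp only [Matrix.mul_apply, hJ, allOnes, Matrix.of_apply, one_mul,
      Matrix.zero_apply]
    exact hcolL v
  have hJJ : J * J = (Fintype.card V : ℝ) • J := by
    ext u v
    simp [hJ, allOnes, Matrix.mul_apply]
  -- the key projection identity  X * L = 1 - n⁻¹ • J
  have hXL : X * L = 1 - (Fintype.card V : ℝ)⁻¹ • J := by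
    set Q : Matrix V V ℝ :=
      X * L - 1 + (Fintype.card V : ℝ)⁻¹ • J with hQ
    have hLQ : L * Q = 0 := by
      have : L * (X * L) = L := by rw [← mul_assoc]; exact hX.1
      rw [hQ, mul_add, mul_sub, this, Matrix.mul_smul, hLJ, mul_one]
      simp
    have hQsymm : ∀ a b : V, Q a b = Q b a := by
      intro a b
      have h4 : (X * L)ᵀ = X * L := hX.2.2.2
      have : Qᵀ = Q := by
        rw [hQ]
        simp [Matrix.transpose_add, Matrix.transpose_sub, Matrix.transpose_smul,
          h4, hJT]
      calc Q a b = Qᵀ b a := rfl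
      _ = Q b a := by rw [this]
    have hQJ : Q * J = 0 := by
      have h1 : (X * L) * J = 0 := by rw [mul_assoc, hLJ, mul_zero]
      rw [hQ, add_mul, sub_mul, h1, one_mul, Matrix.smul_mul, hJJ,
        smul_smul, inv_mul_cancel₀ hn, one_smul]
      simp
    have hQcol : ∀ j i i' : V, Q i j = Q i' j := by
      intro j i i'
      refine hker (fun i => Q i j) ?_ i i'
      ext i
      have : (L *ᵥ fun w => Q w j) i = (L * Q) i j := rfl
      rw [Pi.zero_apply, this, hLQ, Matrix.zero_apply]
    have hQall : ∀ i j i' j' : V, Q i j = Q i' j' := by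
      intro i j i' j'
      calc Q i j = Q j' j := hQcol j i j'
      _ = Q j j' := hQsymm j' j
      _ = Q i' j' := hQcol j' j i'
    obtain ⟨i0⟩ := hNV
    have hc : Q i0 i0 = 0 := by
      have h1 : (Q * J) i0 i0 = 0 := by rw [hQJ]; rfl
      have h2 : (Q * J) i0 i0 = (Fintype.card V : ℝ) * Q i0 i0 := by
        simp only [Matrix.mul_apply, hJ, allOnes, Matrix.of_apply, mul_one]
        rw [Finset.sum_congr rfl fun w _ => hQall i0 w i0 i0]
        simp [Finset.card_univ, mul_comm]
      rw [h2] at h1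
      exact (mul_eq_zero.mp h1).resolve_left hn
    have hQ0 : Q = 0 := by
      ext i j
      rw [Matrix.zero_apply, hQall i j i0 i0, hc]
    have := hQ0
    rw [hQ] at this
    calc X * L = (X * L - 1 + (Fintype.card V : ℝ)⁻¹ • J) + 1
        - (Fintype.card V : ℝ)⁻¹ • J := by abel
    _ = 1 - (Fintype.card V : ℝ)⁻¹ • J := by rw [this]; abel
  -- X is symmetric
  have hXsymm : Xᵀ = X := by
    have h := isMoorePenrose_transpose hX
    have hLT : (lapM G)ᵀ = lapM G := G.isSymm_lapMatrix (R := ℝ)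
    rw [hLT] at h
    exact isMoorePenrose_unique h hX
  have hXs : ∀ a b : V, X a b = X b a := by
    intro a b
    calc X a b = Xᵀ b a := rfl
    _ = X b a := by rw [hXsymm]
  -- main identity with the leftover J * M term
  have hM1 : M = X * (degM G * J) - em • X
      + (Fintype.card V : ℝ)⁻¹ • (J * M) := by
    have e1 : X * (L * M) = X * (degM G * J) - em • X := by
      rw [hL, hi, mul_sub, Matrix.mul_smul, mul_one]
    have e2 : X * (L * M) = M - (Fintype.card V : ℝ)⁻¹ • (J * M) := by
      rw [← mul_assoc, hXL, sub_mul, one_mul, Matrix.smul_mul]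
    rw [e2] at e1
    calc M = (M - (Fintype.card V : ℝ)⁻¹ • (J * M))
        + (Fintype.card V : ℝ)⁻¹ • (J * M) := by abel
    _ = _ := by rw [e1]
  -- compute the leftover term from the diagonal constraint
  have hXDJ : ∀ a b : V, (X * (degM G * J)) a b =
      ∑ w, X a w * (G.degree w : ℝ) := by
    intro a b
    simp only [Matrix.mul_apply]
    refine Finset.sum_congr rfl fun w _ => ?_
    congr 1
    simp [degM, allOnes, hJ, Matrix.mul_apply, Matrix.diagonal]
  have hdiagX : ∀ v : V, (Fintype.card V : ℝ)⁻¹ * (∑ w, M w v) =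
      em * X v v - ∑ w, (G.degree w : ℝ) * X w v := by
    intro v
    have h := congrFun (congrFun hM1 v) v
    rw [h0 v] at h
    have h1 : (X * (degM G * J) - em • X
        + (Fintype.card V : ℝ)⁻¹ • (J * M)) v v =
        (∑ w, X v w * (G.degree w : ℝ)) - em * X v v
        + (Fintype.card V : ℝ)⁻¹ * ∑ w, M w v := by
      simp only [Matrix.add_apply, Matrix.sub_apply, Matrix.smul_apply,
        smul_eq_mul, hXDJ]
      congr 2
      simp [Matrix.mul_apply, hJ, allOnes]
    rw [h1] at h
    have h2 : ∑ w, X v w * (G.degree w : ℝ) =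
        ∑ w, (G.degree w : ℝ) * X w v := by
      refine Finset.sum_congr rfl fun w _ => ?_
      rw [hXs v w]; ring
    rw [h2] at h
    linarith
  have hfinal : (Fintype.card V : ℝ)⁻¹ • (J * M) =
      em • (J * Matrix.diagonal fun u => X u u) - J * degM G * X := by
    ext u v
    have e1 : ((Fintype.card V : ℝ)⁻¹ • (J * M)) u v =
        (Fintype.card V : ℝ)⁻¹ * ∑ w, M w v := by
      simp [Matrix.mul_apply, hJ, allOnes]
    have e2 : (J * Matrix.diagonal fun u => X u u) u v = X v v := by
      simp [Matrix.mul_apply, hJ, allOnes, Matrix.diagonal]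
    have e3 : (J * degM G * X) u v = ∑ w, (G.degree w : ℝ) * X w v := by
      rw [mul_assoc]
      simp only [Matrix.mul_apply, hJ, allOnes, Matrix.of_apply, one_mul]
      rw [Finset.sum_comm]
      refine Finset.sum_congr rfl fun w _ => ?_
      simp [degM, Matrix.diagonal, Matrix.mul_apply]
    rw [Matrix.sub_apply, e1, Matrix.smul_apply, e2, e3, smul_eq_mul]
    exact hdiagX v
  rw [hM1, hfinal, ← mul_assoc]
  abel

end EPWL
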